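/- Left extension lemma: let Φ₀ be a finite set of formulas closed under subformulas and under ∼. For any subsets u, v ⊆ Φ₀ and set of formulas w such that the pair (u,v) is w-consistent in ℜ, there exists a subset u' ⊆ Φ₀ with u ⊆ u' such that u' is consistent in ℜ, u' is complete (for every φ ∈ Φ₀, φ ∈ u' or ∼φ ∈ u'), and the pair (u',v) is w-consistent in ℜ. -/

import Mathlib

/-- Formulas of the modal language 𝓛: propositional variables, ⊥, →, and ▷. -/
inductive Formula : Type
  | var : ℕ → Formula
  | bot : Formula
  | imp : Formula → Formula → Formula
  | tri : Formula → Formula → Formula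
deriving DecidableEq

namespace Formula

/-- ¬φ := φ → ⊥ -/
def neg (φ : Formula) : Formula := imp φ bot
/-- ⊤ := ¬⊥ -/
def top : Formula := neg bot
/-- φ ∨ ψ := ¬φ → ψ -/
def disj (φ ψ : Formula) : Formula := imp (neg φ) ψ
/-- φ ∧ ψ := ¬(φ → ¬ψ) -/
def conj (φ ψ : Formula) : Formula := neg (imp φ (neg ψ))

/-- `φ` is a substitution instance of a classical propositional tautology:
it evaluates to `true` under every boolean valuation of formulas that
respects `⊥` and `→` (variables and `▷`-formulas are treated as atoms). -/
def IsPropTaut (φ : Formula) : Prop :=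
  ∀ v : Formula → Bool, v bot = false →
    (∀ a b, v (imp a b) = (!(v a) || v b)) → v φ = true

/-- Hilbert-style provability.  `Prv false` is the logic ℜ (axioms: classical
tautologies, A1, A2, A3; rules: Modus Ponens and monotonicity M);
`Prv true` is the logic ℜ_d, which additionally has axiom A4. -/
inductive Prv : Bool → Formula → Prop
  | taut {d : Bool} {φ} : IsPropTaut φ → Prv d φ
  | a1 {d : Bool} (φ ψ χ) : Prv d (imp (tri φ ψ) (imp (tri χ ψ) (tri (disj φ χ) ψ)))
  | a2 {d : Bool} (φ) : Prv d (tri bot φ)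
  | a3 {d : Bool} (φ) : Prv d (tri φ top)
  | a4 (φ ψ χ) : Prv true (imp (tri φ ψ) (imp (tri φ χ) (tri φ (conj ψ χ))))
  | mp {d : Bool} {φ ψ} : Prv d (imp φ ψ) → Prv d φ → Prv d ψ
  | mono {d : Bool} {φ₁ φ₂ ψ₁ ψ₂} : Prv d (imp φ₁ φ₂) → Prv d (imp ψ₁ ψ₂) →
      Prv d (imp (tri φ₂ ψ₁) (tri φ₁ ψ₂))

/-- `Deriv d Δ φ`: φ is derivable from the hypotheses Δ together with all
theorems of the logic (`Prv d`) using only Modus Ponens. -/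
inductive Deriv (d : Bool) (Δ : Set Formula) : Formula → Prop
  | hyp {φ} : φ ∈ Δ → Deriv d Δ φ
  | thm {φ} : Prv d φ → Deriv d Δ φ
  | mp {φ ψ} : Deriv d Δ (imp φ ψ) → Deriv d Δ φ → Deriv d Δ ψ

/-- Conjunction of a list of formulas (empty conjunction is ⊤). -/
def conjList : List Formula → Formula
  | [] => top
  | φ :: l => conj φ (conjList l)

/-- ⋀Γ : conjunction of all formulas of a finite set Γ (⋀∅ = ⊤). -/
noncomputable def bigConj (Γ : Finset Formula) : Formula := conjList Γ.toList

/-- A set of formulas is consistent if ⊥ is not derivable from it. -/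
def Consistent (d : Bool) (Δ : Set Formula) : Prop := ¬ Deriv d Δ bot

/-- The pair (u,v) is w-consistent: w ⊬ ⋀u ▷ ¬⋀v. -/
def WCons (d : Bool) (w : Set Formula) (u v : Finset Formula) : Prop :=
  ¬ Deriv d w (tri (bigConj u) (neg (bigConj v)))

/-- The operation ∼: ∼(¬φ) = φ, and ∼φ = ¬φ if φ is not a negation. -/
def simNeg : Formula → Formula
  | imp φ bot => φ
  | φ => neg φ

/-- Φ is closed under subformulas. -/
def SubClosed (Φ : Finset Formula) : Prop :=
  (∀ a b, imp a b ∈ Φ → a ∈ Φ ∧ b ∈ Φ) ∧ (∀ a b, tri a b ∈ Φ → a ∈ Φ ∧ b ∈ Φ)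

/-- Φ is closed under the operation ∼. -/
def SimClosed (Φ : Finset Formula) : Prop := ∀ φ ∈ Φ, simNeg φ ∈ Φ

/-- w is a maximal consistent subset of Φ: w ⊆ Φ, w is consistent, and for
every φ ∈ Φ either φ ∈ w or ∼φ ∈ w. -/
def MaxCons (d : Bool) (Φ : Finset Formula) (w : Finset Formula) : Prop :=
  w ⊆ Φ ∧ Consistent d ↑w ∧ ∀ φ ∈ Φ, φ ∈ w ∨ simNeg φ ∈ w

/-- Kripke forcing: `rel w u v` means u →_w v, `val w p` means w ⊩ p. -/
def Forces {W : Type*} (rel : W → W → W → Prop) (val : W → ℕ → Prop) :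
    W → Formula → Prop
  | w, var p => val w p
  | _, bot => False
  | w, imp a b => Forces rel val w a → Forces rel val w b
  | w, tri a b => ∀ u v, rel w u v → Forces rel val u a →
      ∃ v', rel w u v' ∧ Forces rel val v' b

end Formula

/-- A Kripke model: a finite set of worlds, a ternary computability relation,
and a forcing relation between worlds and propositional variables. -/
structure KripkeModel where
  W : Type
  fin : Finite W
  rel : W → W → W → Prop
  val : W → ℕ → Prop

/-- A Kripke model is deterministic if for all worlds w, u there is at most
one v with u →_w v. -/
def KripkeModel.Deterministic (M : KripkeModel) : Prop :=
  ∀ w u v v', M.rel w u v → M.rel w u v' → v = v'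

/-- Forcing in a Kripke model. -/
def KripkeModel.Forces (M : KripkeModel) : M.W → Formula → Prop :=
  Formula.Forces M.rel M.val

/-- The standard enumeration of nondeterministic partial recursive functions:
ζ_w(u) = the set of possible outputs of machine (code) w on input u. -/
def zeta (w u : ℕ) : Set ℕ :=
  {v | ((Denumerable.ofNat Nat.Partrec.Code w).eval (Nat.pair u v)).Dom}

/-- The standard enumeration of deterministic partial recursive functions:
ξ_w(u) = the value of the partial recursive function with code w on input u. -/
def xi (w u : ℕ) : Part ℕ :=
  (Denumerable.ofNat Nat.Partrec.Code w).eval u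

namespace Formula

/-- Set semantics for nondeterministic partial recursive functions
(existential reading of ▷). -/
def semN (val : ℕ → Set ℕ) : Formula → Set ℕ
  | var p => val p
  | bot => ∅
  | imp a b => (Set.univ \ semN val a) ∪ semN val b
  | tri a b => {w | ∀ u ∈ semN val a, zeta w u ≠ ∅ → zeta w u ∩ semN val b ≠ ∅}

/-- Set semantics for deterministic partial recursive functions. -/
def semD (val : ℕ → Set ℕ) : Formula → Set ℕ
  | var p => val p
  | bot => ∅
  | imp a b => (Set.univ \ semD val a) ∪ semD val b
  | tri a b => {w | ∀ u ∈ semD val a, ∀ h : (xi w u).Dom, (xi w u).get h ∈ semD val b}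

/-- Universal set semantics for nondeterministic partial recursive functions:
every terminating computation path from φ* ends in ψ*. -/
def semU (val : ℕ → Set ℕ) : Formula → Set ℕ
  | var p => val p
  | bot => ∅
  | imp a b => (Set.univ \ semU val a) ∪ semU val b
  | tri a b => {w | ∀ u ∈ semU val a, zeta w u ⊆ semU val b}

/-- A canonical injective encoding of formulas as natural numbers. -/
def enc : Formula → ℕ
  | var n => 4 * n
  | bot => 1
  | imp a b => 4 * Nat.pair (enc a) (enc b) + 2
  | tri a b => 4 * Nat.pair (enc a) (enc b) + 3

end Formula

namespace Formula

section Valn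
variable {v : Formula → Bool} (hb : v bot = false)
  (hi : ∀ a b, v (imp a b) = (!(v a) || v b))
include hb hi

lemma v_neg (a) : v (neg a) = !(v a) := by simp [neg, hi, hb]

lemma v_conj (a b) : v (conj a b) = (v a && v b) := by
  simp [conj, v_neg hb hi, hi]

lemma v_disj (a b) : v (disj a b) = (v a || v b) := by
  simp [disj, v_neg hb hi, hi]

lemma v_simNeg (a) : v (simNeg a) = !(v a) := by
  cases a with
  | imp x y => cases y <;> simp [simNeg, neg, hi, hb]
  | var n => simp [simNeg, neg, hi, hb]
  | bot => simp [simNeg, neg, hi, hb]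
  | tri x y => simp [simNeg, neg, hi, hb]

lemma v_conjList (l : List Formula) : v (conjList l) = l.all (fun x => v x) := by
  induction l with
  | nil => simp [conjList, top, v_neg hb hi, hb]
  | cons a l ih => simp [conjList, v_conj hb hi, ih]

lemma v_bigConj (Γ : Finset Formula) :
    v (bigConj Γ) = true ↔ ∀ x ∈ Γ, v x = true := by
  simp [bigConj, v_conjList hb hi, List.all_eq_true]

end Valn

lemma taut_refl (a) : IsPropTaut (imp a a) := by
  intro v hb hi; simp [hi]

lemma taut_k (a c) : IsPropTaut (imp a (imp c a)) := by
  intro v hb hi; cases ha : v a <;> cases hc : v c <;> simp [hi, ha, hc]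

lemma taut_s (c a b) :
    IsPropTaut (imp (imp c (imp a b)) (imp (imp c a) (imp c b))) := by
  intro v hb hi
  cases ha : v a <;> cases hb' : v b <;> cases hc : v c <;> simp [hi, ha, hb', hc]

lemma taut_of_mem {Γ : Finset Formula} {a} (h : a ∈ Γ) :
    IsPropTaut (imp (bigConj Γ) a) := by
  intro v hb hi
  simp only [hi, Bool.or_eq_true, Bool.not_eq_true']
  rcases Bool.eq_false_or_eq_true (v (bigConj Γ)) with h' | h'
  · exact Or.inr ((v_bigConj hb hi Γ).1 h' a h)
  · exact Or.inl h'

lemma taut_split (u : Finset Formula) (φ : Formula) :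
    IsPropTaut (imp (bigConj u)
      (disj (bigConj (insert φ u)) (bigConj (insert (simNeg φ) u)))) := by
  intro v hb hi
  simp only [hi, v_disj hb hi, Bool.or_eq_true, Bool.not_eq_true']
  rcases Bool.eq_false_or_eq_true (v (bigConj u)) with h' | h'
  · refine Or.inr ?_
    have hu := (v_bigConj hb hi u).1 h'
    rcases Bool.eq_false_or_eq_true (v φ) with hφ | hφ
    · refine Or.inl ((v_bigConj hb hi _).2 ?_)
      intro x hx
      rcases Finset.mem_insert.1 hx with rfl | hx
      · exact hφ
      · exact hu x hx
    · refine Or.inr ((v_bigConj hb hi _).2 ?_)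
      intro x hx
      rcases Finset.mem_insert.1 hx with rfl | hx
      · rw [v_simNeg hb hi, hφ]; rfl
      · exact hu x hx
  · exact Or.inl h'

/-- Deduction-style lemma: derivability from a finite set gives a provable
implication from its big conjunction. -/
lemma deduction {d : Bool} {u : Finset Formula} {φ : Formula}
    (h : Deriv d (↑u : Set Formula) φ) : Prv d (imp (bigConj u) φ) := by
  induction h with
  | hyp hm => exact Prv.taut (taut_of_mem hm)
  | thm hp => exact Prv.mp (Prv.taut (taut_k _ _)) hp
  | mp _ _ ih1 ih2 => exact Prv.mp (Prv.mp (Prv.taut (taut_s _ _ _)) ih1) ih2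

lemma wcons_consistent {d : Bool} {w : Set Formula} {u v : Finset Formula}
    (h : WCons d w u v) : Consistent d (↑u : Set Formula) := by
  intro hbot
  have h1 : Prv d (imp (bigConj u) bot) := deduction hbot
  have h2 : Prv d (imp (tri bot (neg (bigConj v))) (tri (bigConj u) (neg (bigConj v)))) :=
    Prv.mono h1 (Prv.taut (taut_refl _))
  exact h (Deriv.thm (Prv.mp h2 (Prv.a2 _)))

lemma wcons_split {d : Bool} {w : Set Formula} {u v : Finset Formula} (φ : Formula)
    (h : WCons d w u v) :
    WCons d w (insert φ u) v ∨ WCons d w (insert (simNeg φ) u) v := by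
  by_contra hc
  push_neg at hc
  obtain ⟨h1, h2⟩ := hc
  rw [WCons, not_not] at h1 h2
  set ψ := neg (bigConj v)
  have hA : Deriv d w (tri (disj (bigConj (insert φ u)) (bigConj (insert (simNeg φ) u))) ψ) :=
    Deriv.mp (Deriv.mp (Deriv.thm (Prv.a1 _ _ _)) h1) h2
  have hmono : Prv d (imp
      (tri (disj (bigConj (insert φ u)) (bigConj (insert (simNeg φ) u))) ψ)
      (tri (bigConj u) ψ)) :=
    Prv.mono (Prv.taut (taut_split u φ)) (Prv.taut (taut_refl ψ))
  exact h (Deriv.mp (Deriv.thm hmono) hA)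

lemma left_extension_list {d : Bool} (Φ₀ : Finset Formula) (hsim : SimClosed Φ₀)
    (v : Finset Formula) (w : Set Formula) :
    ∀ (l : List Formula), (∀ φ ∈ l, φ ∈ Φ₀) →
    ∀ u : Finset Formula, u ⊆ Φ₀ → WCons d w u v →
    ∃ u' : Finset Formula, u' ⊆ Φ₀ ∧ u ⊆ u' ∧
      (∀ φ ∈ l, φ ∈ u' ∨ simNeg φ ∈ u') ∧ WCons d w u' v := by
  intro l
  induction l with
  | nil => intro _ u hu h; exact ⟨u, hu, le_refl u, by simp, h⟩
  | cons φ l ih =>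
    intro hl u hu h
    have hφ : φ ∈ Φ₀ := hl φ List.mem_cons_self
    have hl' : ∀ ψ ∈ l, ψ ∈ Φ₀ := fun ψ hψ => hl ψ (List.mem_cons_of_mem _ hψ)
    rcases wcons_split φ h with h' | h'
    · obtain ⟨u', h1, h2, h3, h4⟩ := ih hl' (insert φ u)
        (Finset.insert_subset hφ hu) h'
      refine ⟨u', h1, Finset.Subset.trans (Finset.subset_insert _ _) h2, ?_, h4⟩
      intro ψ hψ
      rcases List.mem_cons.1 hψ with rfl | hψ
      · exact Or.inl (h2 (Finset.mem_insert_self _ _))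
      · exact h3 ψ hψ
    · obtain ⟨u', h1, h2, h3, h4⟩ := ih hl' (insert (simNeg φ) u)
        (Finset.insert_subset (hsim φ hφ) hu) h'
      refine ⟨u', h1, Finset.Subset.trans (Finset.subset_insert _ _) h2, ?_, h4⟩
      intro ψ hψ
      rcases List.mem_cons.1 hψ with rfl | hψ
      · exact Or.inr (h2 (Finset.mem_insert_self _ _))
      · exact h3 ψ hψ

end Formula

open Formula in
/-- Left extension lemma: a w-consistent (in ℜ) pair (u,v) of subsets of a
finite, subformula- and ∼-closed set Φ₀ can be extended on the left to a
complete consistent subset u' of Φ₀ keeping (u',v) w-consistent. -/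
theorem left_extension (Φ₀ : Finset Formula)
    (hsub : SubClosed Φ₀) (hsim : SimClosed Φ₀)
    (u v : Finset Formula) (hu : u ⊆ Φ₀) (hv : v ⊆ Φ₀)
    (w : Set Formula) (h : WCons false w u v) :
    ∃ u' : Finset Formula, u' ⊆ Φ₀ ∧ u ⊆ u' ∧
      Consistent false (↑u' : Set Formula) ∧
      (∀ φ ∈ Φ₀, φ ∈ u' ∨ simNeg φ ∈ u') ∧
      WCons false w u' v := by
  obtain ⟨u', h1, h2, h3, h4⟩ :=
    left_extension_list Φ₀ hsim v w Φ₀.toList (fun φ hφ => Finset.mem_toList.1 hφ) u hu h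
  exact ⟨u', h1, h2, wcons_consistent h4,
    fun φ hφ => h3 φ (Finset.mem_toList.2 hφ), h4⟩
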